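/- For all real c > 0 and X ∈ ℝ, the improper integral converges and ∫_X^∞ ( 1 − 2 e^{−x/2} F(e^{−x/2}) ) e^{−x/2 − c e^{−x}} dx = (2/(c+1)) · e^{−c e^{−X}} · F(e^{−X/2}) + √π · (√c/(c+1)) · erf(√c · e^{−X/2}). -/

import Mathlib

open MeasureTheory

/-- The Dawson function `F(x) = e^{−x²} ∫₀ˣ e^{t²} dt`. -/
noncomputable def dawson (x : ℝ) : ℝ := Real.exp (-x ^ 2) * ∫ t in (0 : ℝ)..x, Real.exp (t ^ 2)

/-- The error function `erf(x) = (2/√π) ∫₀ˣ e^{−t²} dt`. -/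
noncomputable def erf (x : ℝ) : ℝ := 2 / Real.sqrt Real.pi * ∫ t in (0 : ℝ)..x, Real.exp (-t ^ 2)

lemma dawson_hasDerivAt (x : ℝ) : HasDerivAt dawson (1 - 2 * x * dawson x) x := by
  have hI : HasDerivAt (fun u : ℝ => ∫ t in (0:ℝ)..u, Real.exp (t ^ 2)) (Real.exp (x ^ 2)) x :=
    ((Real.continuous_exp.comp (continuous_pow 2)).integral_hasStrictDerivAt 0 x).hasDerivAt
  have hp : HasDerivAt (fun y : ℝ => -y ^ 2) (-(2 * x)) x := by
    simpa using (hasDerivAt_pow 2 x).fun_neg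
  have h1 : HasDerivAt (fun y : ℝ => Real.exp (-y ^ 2)) (Real.exp (-x ^ 2) * -(2 * x)) x :=
    hp.exp
  have H := h1.mul hI
  have key : Real.exp (-x ^ 2) * Real.exp (x ^ 2) = 1 := by
    rw [← Real.exp_add]; simp
  unfold dawson
  refine H.congr_deriv ?_
  rw [key]; ring

lemma erf_hasDerivAt (x : ℝ) : HasDerivAt erf (2 / Real.sqrt Real.pi * Real.exp (-x ^ 2)) x := by
  have hI : HasDerivAt (fun u : ℝ => ∫ t in (0:ℝ)..u, Real.exp (-t ^ 2)) (Real.exp (-x ^ 2)) x :=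
    ((Real.continuous_exp.comp (continuous_pow 2).neg).integral_hasStrictDerivAt 0 x).hasDerivAt
  exact hI.const_mul (2 / Real.sqrt Real.pi)

lemma abs_dawson_le (u : ℝ) : |dawson u| ≤ |u| := by
  unfold dawson
  rw [abs_mul, Real.abs_exp]
  have h : ‖∫ t in (0:ℝ)..u, Real.exp (t ^ 2)‖ ≤ Real.exp (u ^ 2) * |u - 0| := by
    apply intervalIntegral.norm_integral_le_of_norm_le_const
    intro t ht
    rw [Real.norm_eq_abs, Real.abs_exp]
    apply Real.exp_le_exp.2
    rcases Set.mem_uIoc.1 ht with ⟨h1, h2⟩ | ⟨h1, h2⟩ <;> nlinarith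
  rw [Real.norm_eq_abs, sub_zero] at h
  calc Real.exp (-u ^ 2) * |∫ t in (0:ℝ)..u, Real.exp (t ^ 2)|
      ≤ Real.exp (-u ^ 2) * (Real.exp (u ^ 2) * |u|) := by
        exact mul_le_mul_of_nonneg_left h (Real.exp_nonneg _)
    _ = |u| := by rw [← mul_assoc, ← Real.exp_add]; simp

/-- lower-tail integral identity for all `c > 0`, `X ∈ ℝ`. -/
theorem lower_tail_integral (c X : ℝ) (hc : 0 < c) :
    IntegrableOn
      (fun x : ℝ => (1 - 2 * Real.exp (-x / 2) * dawson (Real.exp (-x / 2))) *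
        Real.exp (-x / 2 - c * Real.exp (-x))) (Set.Ioi X) ∧
      ∫ x in Set.Ioi X, (1 - 2 * Real.exp (-x / 2) * dawson (Real.exp (-x / 2))) *
          Real.exp (-x / 2 - c * Real.exp (-x))
        = 2 / (c + 1) * Real.exp (-(c * Real.exp (-X))) * dawson (Real.exp (-X / 2))
            + Real.sqrt Real.pi * (Real.sqrt c / (c + 1)) * erf (Real.sqrt c * Real.exp (-X / 2)) := by
  set f : ℝ → ℝ := fun x => (1 - 2 * Real.exp (-x / 2) * dawson (Real.exp (-x / 2))) *
    Real.exp (-x / 2 - c * Real.exp (-x)) with hf_def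
  set g : ℝ → ℝ := fun x => 2 / (c + 1) * Real.exp (-(c * Real.exp (-x))) * dawson (Real.exp (-x / 2))
    + Real.sqrt Real.pi * (Real.sqrt c / (c + 1)) * erf (Real.sqrt c * Real.exp (-x / 2)) with hg_def
  have hc1 : c + 1 ≠ 0 := by positivity
  have hπ : Real.sqrt Real.pi ≠ 0 := ne_of_gt (Real.sqrt_pos.2 Real.pi_pos)
  have hdd : Differentiable ℝ dawson := fun x => (dawson_hasDerivAt x).differentiableAt
  have hdc : Continuous dawson := hdd.continuous
  -- derivative of g
  have hg : ∀ x : ℝ, HasDerivAt g (-(f x)) x := by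
    intro x
    have h_half : HasDerivAt (fun y : ℝ => -y / 2) ((-1 : ℝ)/2) x :=
      (hasDerivAt_id x).neg.div_const 2
    have h_u : HasDerivAt (fun y : ℝ => Real.exp (-y / 2)) (Real.exp (-x / 2) * (-1/2)) x :=
      h_half.exp
    have h_negid : HasDerivAt (fun y : ℝ => -y) (-1 : ℝ) x := by
      simpa using (hasDerivAt_id x).fun_neg
    have h_e : HasDerivAt (fun y : ℝ => Real.exp (-y)) (Real.exp (-x) * -1) x :=
      (Real.hasDerivAt_exp (-x)).comp x h_negid
    have h_in : HasDerivAt (fun y : ℝ => -(c * Real.exp (-y))) (-(c * (Real.exp (-x) * -1))) x :=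
      (h_e.const_mul c).neg
    have h_A : HasDerivAt (fun y : ℝ => Real.exp (-(c * Real.exp (-y))))
        (Real.exp (-(c * Real.exp (-x))) * -(c * (Real.exp (-x) * -1))) x :=
      (Real.hasDerivAt_exp _).comp x h_in
    have h_D : HasDerivAt (fun y : ℝ => dawson (Real.exp (-y / 2)))
        ((1 - 2 * Real.exp (-x / 2) * dawson (Real.exp (-x / 2))) * (Real.exp (-x / 2) * (-1/2))) x :=
      (dawson_hasDerivAt _).comp x h_u
    have h_su : HasDerivAt (fun y : ℝ => Real.sqrt c * Real.exp (-y / 2))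
        (Real.sqrt c * (Real.exp (-x / 2) * (-1/2))) x := h_u.const_mul _
    have h_E : HasDerivAt (fun y : ℝ => erf (Real.sqrt c * Real.exp (-y / 2)))
        (2 / Real.sqrt Real.pi * Real.exp (-(Real.sqrt c * Real.exp (-x / 2)) ^ 2) *
          (Real.sqrt c * (Real.exp (-x / 2) * (-1/2)))) x :=
      (erf_hasDerivAt _).comp x h_su
    have H := ((h_A.const_mul (2 / (c + 1))).mul h_D).add
      (h_E.const_mul (Real.sqrt Real.pi * (Real.sqrt c / (c + 1))))
    have hsq : (Real.sqrt c * Real.exp (-x / 2)) ^ 2 = c * Real.exp (-x) := by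
      rw [mul_pow, Real.sq_sqrt hc.le, sq, ← Real.exp_add]; ring_nf
    have hu2 : Real.exp (-x) = Real.exp (-x / 2) * Real.exp (-x / 2) := by
      rw [← Real.exp_add]; ring_nf
    have hsplit : Real.exp (-x / 2 - c * Real.exp (-x))
        = Real.exp (-x / 2) * Real.exp (-(c * Real.exp (-x))) := by
      rw [← Real.exp_add]; ring_nf
    refine H.congr_deriv ?_
    rw [hf_def]
    simp only
    rw [hsplit, hsq, hu2]
    set s := Real.sqrt c with hs
    have hcc : s * s = c := Real.mul_self_sqrt hc.le
    have h2 : s * s + 1 ≠ 0 := by rw [hcc]; exact hc1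
    rw [← hcc]
    field_simp
    ring
  -- integrability
  have hcu : Continuous fun x : ℝ => Real.exp (-x / 2) := by fun_prop
  have hcf : Continuous f := by
    apply Continuous.mul
    · exact continuous_const.sub ((continuous_const.mul hcu).mul (hdc.comp hcu))
    · fun_prop
  have hint : IntegrableOn f (Set.Ioi X) := by
    have hbase : IntegrableOn (fun x => Real.exp (-(1/2 : ℝ) * x)) (Set.Ioi X) :=
      exp_neg_integrableOn_Ioi X (by norm_num)
    apply Integrable.mono' (hbase.const_mul (1 + 2 * Real.exp (-X)))
    · exact hcf.aestronglyMeasurable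
    · filter_upwards [ae_restrict_mem measurableSet_Ioi] with x hx
      have hxX : X < x := hx
      set u := Real.exp (-x / 2) with hu
      have hu2 : u * u = Real.exp (-x) := by rw [hu, ← Real.exp_add]; ring_nf
      have hF : |dawson u| ≤ u := le_trans (abs_dawson_le u) (le_of_eq (abs_of_pos (Real.exp_pos _)))
      have h1 : |1 - 2 * u * dawson u| ≤ 1 + 2 * Real.exp (-X) := by
        have : |1 - 2 * u * dawson u| ≤ 1 + 2 * u * |dawson u| := by
          calc |1 - 2 * u * dawson u| ≤ |(1:ℝ)| + |2 * u * dawson u| := abs_sub _ _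
            _ = 1 + 2 * u * |dawson u| := by
                rw [abs_one, abs_mul, abs_mul, abs_two, abs_of_pos (Real.exp_pos _)]
        refine this.trans ?_
        have : u * |dawson u| ≤ Real.exp (-X) := by
          calc u * |dawson u| ≤ u * u := mul_le_mul_of_nonneg_left hF (Real.exp_pos _).le
            _ = Real.exp (-x) := hu2
            _ ≤ Real.exp (-X) := Real.exp_le_exp.2 (by linarith)
        linarith
      have h2 : Real.exp (-x / 2 - c * Real.exp (-x)) ≤ Real.exp (-(1/2 : ℝ) * x) := by
        apply Real.exp_le_exp.2
        have := mul_pos hc (Real.exp_pos (-x))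
        linarith
      rw [hf_def]
      simp only [Real.norm_eq_abs]
      rw [abs_mul, abs_of_pos (Real.exp_pos _)]
      have hb : (0:ℝ) ≤ 1 + 2 * Real.exp (-X) := by positivity
      calc |1 - 2 * u * dawson u| * Real.exp (-x / 2 - c * Real.exp (-x))
          ≤ (1 + 2 * Real.exp (-X)) * Real.exp (-(1/2 : ℝ) * x) :=
            mul_le_mul h1 h2 (Real.exp_pos _).le hb
        _ = _ := rfl
  refine ⟨hint, ?_⟩
  -- limit of g at infinity
  have hu0 : Filter.Tendsto (fun x : ℝ => Real.exp (-x / 2)) Filter.atTop (nhds 0) := by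
    apply Real.tendsto_exp_atBot.comp
    apply Filter.Tendsto.atBot_div_const (by norm_num : (0:ℝ) < 2)
    exact Filter.tendsto_neg_atTop_atBot
  have he0 : Filter.Tendsto (fun x : ℝ => Real.exp (-x)) Filter.atTop (nhds 0) :=
    Real.tendsto_exp_atBot.comp Filter.tendsto_neg_atTop_atBot
  have hA1 : Filter.Tendsto (fun x : ℝ => Real.exp (-(c * Real.exp (-x)))) Filter.atTop (nhds 1) := by
    have : Filter.Tendsto (fun x : ℝ => -(c * Real.exp (-x))) Filter.atTop (nhds 0) := by
      simpa using ((he0.const_mul c).neg)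
    simpa [Function.comp_def] using (Real.continuous_exp.continuousAt.tendsto.comp this)
  have hD0 : Filter.Tendsto (fun x : ℝ => dawson (Real.exp (-x / 2))) Filter.atTop (nhds 0) := by
    have := (hdc.continuousAt (x := 0)).tendsto.comp hu0
    simpa [dawson, Function.comp_def] using this
  have hE0 : Filter.Tendsto (fun x : ℝ => erf (Real.sqrt c * Real.exp (-x / 2))) Filter.atTop (nhds 0) := by
    have hed : Differentiable ℝ erf := fun x => (erf_hasDerivAt x).differentiableAt
    have hec : Continuous erf := hed.continuous
    have harg : Filter.Tendsto (fun x : ℝ => Real.sqrt c * Real.exp (-x / 2)) Filter.atTop (nhds 0) := by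
      simpa using hu0.const_mul (Real.sqrt c)
    have := (hec.continuousAt (x := 0)).tendsto.comp harg
    simpa [erf, Function.comp_def] using this
  have hglim : Filter.Tendsto g Filter.atTop (nhds 0) := by
    rw [hg_def]
    have := (((tendsto_const_nhds (x := (2 / (c+1) : ℝ))).mul hA1).mul hD0).add
      ((tendsto_const_nhds (x := (Real.sqrt Real.pi * (Real.sqrt c / (c + 1)) : ℝ))).mul hE0)
    simpa using this
  have key := integral_Ioi_of_hasDerivAt_of_tendsto
    (f := g) (f' := fun x => -(f x)) (a := X) (m := 0)
    (hg X).continuousAt.continuousWithinAt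
    (fun x _ => hg x) hint.neg hglim
  rw [integral_neg] at key
  have : ∫ x in Set.Ioi X, f x = g X := by linarith [key]
  simpa [hf_def, hg_def] using this
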